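/- arXiv:2504.01820 — 2 statements merged into one kernel-verified Lean document; each statement's English description precedes it below -/
import Mathlib

section
/- Suppose a probability vector (p_i) over distinct reals (φ_i) maximizes the variance ∑ p_i φ_i² − (∑ p_i φ_i)² subject to ∑ p_i = 1, p_i ≥ 0, and the values φ_i are not all equal. Then at most two distinct values φ_i have p_i > 0. -/
lemma sum_trip {M : ℕ} (i j k : Fin M) (hij : i ≠ j) (hik : i ≠ k) (hjk : j ≠ k)
    (a b c : ℝ) (f : Fin M → ℝ) :
    ∑ x, ((if x = i then a else 0) + (if x = j then b else 0) + (if x = k then c else 0)) * f x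
      = a * f i + b * f j + c * f k := by
  have key : ∀ x, ((if x = i then a else 0) + (if x = j then b else 0) + (if x = k then c else 0)) * f x
      = (if x = i then a * f i else 0) + (if x = j then b * f j else 0) + (if x = k then c * f k else 0) := by
    intro x
    by_cases h1 : x = i <;> by_cases h2 : x = j <;> by_cases h3 : x = k <;>
      subst_vars <;> simp_all <;> ring
  simp only [key, Finset.sum_add_distrib, Finset.sum_ite_eq', Finset.mem_univ, if_true]

set_option maxHeartbeats 1000000 in
theorem maximizer_support_at_most_two (M : ℕ) (φ p : Fin M → ℝ)
    (hφ : Function.Injective φ)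
    (hnc : ∃ i j, φ i ≠ φ j)
    (hp : ∀ i, 0 ≤ p i) (hsum : ∑ i, p i = 1)
    (hmax : ∀ q : Fin M → ℝ, (∀ i, 0 ≤ q i) → ∑ i, q i = 1 →
      ∑ i, q i * φ i ^ 2 - (∑ i, q i * φ i) ^ 2 ≤
        ∑ i, p i * φ i ^ 2 - (∑ i, p i * φ i) ^ 2) :
    ((Finset.univ.filter fun i => 0 < p i).image φ).card ≤ 2 := by
  by_contra hcon
  push_neg at hcon
  rw [Finset.two_lt_card_iff] at hcon
  obtain ⟨va, vb, vc, ha, hb, hc, hab, hac, hbc⟩ := hcon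
  obtain ⟨i, hi, rfl⟩ := Finset.mem_image.mp ha
  obtain ⟨j, hj, rfl⟩ := Finset.mem_image.mp hb
  obtain ⟨k, hk, rfl⟩ := Finset.mem_image.mp hc
  have hpi : 0 < p i := (Finset.mem_filter.mp hi).2
  have hpj : 0 < p j := (Finset.mem_filter.mp hj).2
  have hpk : 0 < p k := (Finset.mem_filter.mp hk).2
  have hij : i ≠ j := fun h => hab (by rw [h])
  have hik : i ≠ k := fun h => hac (by rw [h])
  have hjk : j ≠ k := fun h => hbc (by rw [h])
  -- the perturbation direction
  set A : ℝ := φ j - φ k with hA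
  set B : ℝ := φ k - φ i with hB
  set C : ℝ := φ i - φ j with hC
  have hS : A * φ i ^ 2 + B * φ j ^ 2 + C * φ k ^ 2
      = (φ i - φ j) * (φ j - φ k) * (φ i - φ k) := by rw [hA, hB, hC]; ring
  have hSne : A * φ i ^ 2 + B * φ j ^ 2 + C * φ k ^ 2 ≠ 0 := by
    rw [hS]
    exact mul_ne_zero (mul_ne_zero (sub_ne_zero.mpr hab) (sub_ne_zero.mpr hbc))
      (sub_ne_zero.mpr hac)
  -- choose sign so the second moment increases
  set s : ℝ := if 0 < A * φ i ^ 2 + B * φ j ^ 2 + C * φ k ^ 2 then 1 else -1 with hs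
  have hsS : 0 < s * (A * φ i ^ 2 + B * φ j ^ 2 + C * φ k ^ 2) := by
    rcases lt_trichotomy (A * φ i ^ 2 + B * φ j ^ 2 + C * φ k ^ 2) 0 with h | h | h
    · rw [hs, if_neg (by linarith)]; nlinarith
    · exact absurd h hSne
    · rw [hs, if_pos h]; nlinarith
  set a : ℝ := s * A with ha'
  set b : ℝ := s * B with hb'
  set c : ℝ := s * C with hc'
  set D : ℝ := |a| + |b| + |c| + 1 with hD
  have hD1 : 1 ≤ D := by
    have := abs_nonneg a; have := abs_nonneg b; have := abs_nonneg c
    rw [hD]; linarith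
  have hD0 : 0 < D := by linarith
  set m : ℝ := min (p i) (min (p j) (p k)) with hm
  have hm0 : 0 < m := lt_min hpi (lt_min hpj hpk)
  set t : ℝ := m / D with ht
  have ht0 : 0 < t := div_pos hm0 hD0
  have hbound : ∀ z : ℝ, |z| ≤ D - 1 → t * |z| ≤ m := by
    intro z hz
    calc t * |z| ≤ t * D := by nlinarith [abs_nonneg z]
    _ = m := by rw [ht, div_mul_cancel₀ m hD0.ne']
  have hta : t * |a| ≤ m := hbound a (by rw [hD]; have := abs_nonneg b; have := abs_nonneg c; linarith)
  have htb : t * |b| ≤ m := hbound b (by rw [hD]; have := abs_nonneg a; have := abs_nonneg c; linarith)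
  have htc : t * |c| ≤ m := hbound c (by rw [hD]; have := abs_nonneg a; have := abs_nonneg b; linarith)
  set e : Fin M → ℝ := fun x =>
    (if x = i then a else 0) + (if x = j then b else 0) + (if x = k then c else 0) with he
  set q : Fin M → ℝ := fun x => p x + t * e x with hq
  have hei : e i = a := by simp [he, hij, hik]
  have hej : e j = b := by simp [he, hij.symm, hjk]
  have hek : e k = c := by simp [he, hik.symm, hjk.symm]
  have hnn : ∀ (px z : ℝ), m ≤ px → t * |z| ≤ m → 0 ≤ px + t * z := by
    intro px z h1 h2
    have h3 : t * -|z| ≤ t * z := mul_le_mul_of_nonneg_left (neg_abs_le z) ht0.le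
    rw [mul_neg] at h3
    linarith
  have hqnn : ∀ x, 0 ≤ q x := by
    intro x
    have hqx : q x = p x + t * e x := rfl
    rw [hqx]
    by_cases h1 : x = i
    · subst h1; rw [hei]; exact hnn _ _ (min_le_left _ _) hta
    · by_cases h2 : x = j
      · subst h2; rw [hej]
        exact hnn _ _ (le_trans (min_le_right _ _) (min_le_left _ _)) htb
      · by_cases h3 : x = k
        · subst h3; rw [hek]
          exact hnn _ _ (le_trans (min_le_right _ _) (min_le_right _ _)) htc
        · have hz : e x = 0 := by simp [he, h1, h2, h3]
          rw [hz, mul_zero, add_zero]; exact hp x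
  have hsumE : ∀ f : Fin M → ℝ, ∑ x, e x * f x = a * f i + b * f j + c * f k := by
    intro f
    simpa [he] using sum_trip i j k hij hik hjk a b c f
  have hsumq : ∀ f : Fin M → ℝ, ∑ x, q x * f x
      = ∑ x, p x * f x + t * (a * f i + b * f j + c * f k) := by
    intro f
    have : ∀ x, q x * f x = p x * f x + t * (e x * f x) := by intro x; simp [hq]; ring
    simp only [this, Finset.sum_add_distrib, ← Finset.mul_sum, hsumE]
  have hqsum : ∑ x, q x = 1 := by
    have := hsumq (fun _ => 1)
    simp only [mul_one] at this
    rw [this, hsum, ha', hb', hc', hA, hB, hC]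
    ring
  have hmean : ∑ x, q x * φ x = ∑ x, p x * φ x := by
    rw [hsumq φ, ha', hb', hc', hA, hB, hC]
    ring
  have hsec : ∑ x, q x * φ x ^ 2
      = ∑ x, p x * φ x ^ 2 + t * (s * (A * φ i ^ 2 + B * φ j ^ 2 + C * φ k ^ 2)) := by
    rw [hsumq (fun x => φ x ^ 2), ha', hb', hc']
    ring
  have := hmax q hqnn hqsum
  rw [hsec, hmean] at this
  nlinarith [mul_pos ht0 hsS]
end

section
/- Let X be a random variable taking values in a finite set S ⊆ ℝ. If Var(X) = (1/4)(max S − min S)² and max S > min S, then P(X = min S) = P(X = max S) = 1/2. -/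
theorem variance_eq_forces_half_half (s : Finset ℝ) (hs : s.Nonempty)
    (p : ℝ → ℝ) (hp : ∀ x ∈ s, 0 ≤ p x) (hsum : ∑ x ∈ s, p x = 1)
    (hlt : s.min' hs < s.max' hs)
    (hvar : ∑ x ∈ s, p x * x ^ 2 - (∑ x ∈ s, p x * x) ^ 2 =
      (1 / 4) * (s.max' hs - s.min' hs) ^ 2) :
    p (s.min' hs) = 1 / 2 ∧ p (s.max' hs) = 1 / 2 := by
  set a := s.min' hs with ha
  set b := s.max' hs with hb
  have hab : a < b := hlt
  have hmem_a : a ∈ s := s.min'_mem hs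
  have hmem_b : b ∈ s := s.max'_mem hs
  set μ := ∑ x ∈ s, p x * x with hμ
  have hQnn : ∀ x ∈ s, 0 ≤ p x * ((x - a) * (b - x)) := by
    intro x hx
    have h1 : a ≤ x := s.min'_le x hx
    have h2 : x ≤ b := s.le_max' x hx
    have h3 := hp x hx
    have := mul_nonneg (sub_nonneg.mpr h1) (sub_nonneg.mpr h2)
    exact mul_nonneg h3 this
  have hQ : ∑ x ∈ s, p x * ((x - a) * (b - x)) = -(μ - (a + b) / 2) ^ 2 := by
    have expand : ∀ x ∈ s, p x * ((x - a) * (b - x)) =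
        (a + b) * (p x * x) - a * b * p x - p x * x ^ 2 := fun x _ => by ring
    rw [Finset.sum_congr rfl expand, Finset.sum_sub_distrib, Finset.sum_sub_distrib,
      ← Finset.mul_sum, ← Finset.mul_sum, hsum]
    linear_combination -hvar
  have hμeq : μ = (a + b) / 2 := by
    have h1 : 0 ≤ ∑ x ∈ s, p x * ((x - a) * (b - x)) := Finset.sum_nonneg hQnn
    nlinarith [sq_nonneg (μ - (a + b) / 2)]
  have hsum0 : ∑ x ∈ s, p x * ((x - a) * (b - x)) = 0 := by
    rw [hQ, hμeq]; ring
  have hterm := (Finset.sum_eq_zero_iff_of_nonneg hQnn).mp hsum0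
  have hzero : ∀ x ∈ s, x ≠ a → x ≠ b → p x = 0 := by
    intro x hx hxa hxb
    have h1 : a < x := lt_of_le_of_ne (s.min'_le x hx) (Ne.symm hxa)
    have h2 : x < b := lt_of_le_of_ne (s.le_max' x hx) hxb
    have hpos : 0 < (x - a) * (b - x) := mul_pos (by linarith) (by linarith)
    have := hterm x hx
    rcases mul_eq_zero.mp this with h | h
    · exact h
    · exact absurd h (ne_of_gt hpos)
  have hsub : ({a, b} : Finset ℝ) ⊆ s := by
    intro x hx
    rcases Finset.mem_insert.mp hx with h | h
    · exact h ▸ hmem_a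
    · exact (Finset.mem_singleton.mp h) ▸ hmem_b
  have hne : a ≠ b := ne_of_lt hab
  have e1 : p a + p b = 1 := by
    have := Finset.sum_subset hsub (fun x hx hnx => by
      apply hzero x hx
      · intro h; exact hnx (by simp [h])
      · intro h; exact hnx (by simp [h]))
    rw [Finset.sum_pair hne] at this
    linarith [this.trans hsum]
  have e2 : p a * a + p b * b = (a + b) / 2 := by
    have := Finset.sum_subset (f := fun x => p x * x) hsub (fun x hx hnx => by
      have h0 : p x = 0 := hzero x hx
        (fun h => hnx (by simp [h])) (fun h => hnx (by simp [h]))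
      show p x * x = 0; rw [h0]; ring)
    rw [Finset.sum_pair hne] at this
    have := this.trans hμeq
    linarith
  have hba : b - a ≠ 0 := sub_ne_zero.mpr (ne_of_gt hab)
  have hpb : p b = 1 / 2 := by
    have key : p b * (b - a) = (1 / 2) * (b - a) := by linear_combination e2 - a * e1
    exact mul_right_cancel₀ hba key
  exact ⟨by linarith, hpb⟩
end
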